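/- arXiv:2510.20781 — 2 statements merged into one kernel-verified Lean document; each statement's English description precedes it below -/
import Mathlib

section
/- Let D_c, β, D₀, λ, α₀, ρ*, g'_*, u*, k > 0 and D'₀ ∈ ℝ, and define the dispersion polynomial P(σ) = (σ + D_c k² + β)(σ + D₀k²)(σ + D₀k² + λ) − α₀g'_*ρ*·(σ + (D₀ − u*D'₀)k²). If D'₀ < −(D₀/u*)·[ (D_c k² + β)(D₀k² + λ)/(α₀ρ*g'_*) − 1 ], then P has a real root σ > 0. That is, when motility is sufficiently repressed at steady state, the spatially uniform steady state admits a positive real growth rate and is linearly unstable. -/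
/-- If motility is sufficiently repressed at steady state, i.e.
`D'₀ < −(D₀/u*)·[(D_ck²+β)(D₀k²+λ)/(α₀ρ*g'_*) − 1]`, then the dispersion polynomial
`P(σ) = (σ+D_ck²+β)(σ+D₀k²)(σ+D₀k²+λ) − α₀g'_*ρ*(σ+(D₀−u*D'₀)k²)` has a real root
`σ > 0`, so the spatially uniform steady state is linearly unstable. -/
theorem repressed_motility_implies_instability
    (Dc beta D0 lam alpha0 rhostar gstar ustar k : ℝ) (D0' : ℝ)
    (hDc : 0 < Dc) (hbeta : 0 < beta) (hD0 : 0 < D0) (hlam : 0 < lam)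
    (halpha : 0 < alpha0) (hrho : 0 < rhostar) (hg : 0 < gstar)
    (hustar : 0 < ustar) (hk : 0 < k)
    (P : ℝ → ℝ)
    (hP : P = fun σ =>
      (σ + Dc * k ^ 2 + beta) * (σ + D0 * k ^ 2) * (σ + D0 * k ^ 2 + lam)
        - alpha0 * gstar * rhostar * (σ + (D0 - ustar * D0') * k ^ 2))
    (hcrit : D0' < -(D0 / ustar) *
      ((Dc * k ^ 2 + beta) * (D0 * k ^ 2 + lam) / (alpha0 * rhostar * gstar) - 1)) :
    ∃ σ : ℝ, 0 < σ ∧ P σ = 0 := by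
  have hk2 : 0 < k ^ 2 := by positivity
  set A : ℝ := alpha0 * gstar * rhostar with hA
  have hApos : 0 < A := by positivity
  set d : ℝ := (D0 - ustar * D0') * k ^ 2 with hd
  -- P 0 < 0
  have hP0 : P 0 < 0 := by
    rw [hP]
    simp only
    have h1 : ustar * D0' < -(D0 * ((Dc * k ^ 2 + beta) * (D0 * k ^ 2 + lam) /
        (alpha0 * rhostar * gstar) - 1)) := by
      have := mul_lt_mul_of_pos_left hcrit hustar
      calc ustar * D0' < ustar * (-(D0 / ustar) *
          ((Dc * k ^ 2 + beta) * (D0 * k ^ 2 + lam) / (alpha0 * rhostar * gstar) - 1)) := this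
        _ = -(D0 * ((Dc * k ^ 2 + beta) * (D0 * k ^ 2 + lam) /
            (alpha0 * rhostar * gstar) - 1)) := by
            field_simp
    -- hence D0 - ustar*D0' > D0 * (a*c)/(A)
    have hArg : alpha0 * rhostar * gstar ≠ 0 := by positivity
    have h2 : D0 * ((Dc * k ^ 2 + beta) * (D0 * k ^ 2 + lam)) <
        (D0 - ustar * D0') * (alpha0 * rhostar * gstar) := by
      have h3 : D0 * ((Dc * k ^ 2 + beta) * (D0 * k ^ 2 + lam) /
          (alpha0 * rhostar * gstar)) < D0 - ustar * D0' := by linarith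
      have h4 := mul_lt_mul_of_pos_right h3 (show (0:ℝ) < alpha0 * rhostar * gstar by positivity)
      calc D0 * ((Dc * k ^ 2 + beta) * (D0 * k ^ 2 + lam))
          = D0 * ((Dc * k ^ 2 + beta) * (D0 * k ^ 2 + lam) /
            (alpha0 * rhostar * gstar)) * (alpha0 * rhostar * gstar) := by
            field_simp
        _ < (D0 - ustar * D0') * (alpha0 * rhostar * gstar) := h4
    rw [hA, hd]
    nlinarith [mul_lt_mul_of_pos_right h2 hk2]
  -- P M ≥ 0 for large M
  set M : ℝ := max (max A |d|) 2 with hM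
  have hM2 : (2:ℝ) ≤ M := le_max_right _ _
  have hMA : A ≤ M := le_trans (le_max_left _ _) (le_max_left _ _)
  have hMd : |d| ≤ M := le_trans (le_max_right _ _) (le_max_left _ _)
  have hMpos : 0 < M := by linarith
  have hPM : 0 ≤ P M := by
    rw [hP]
    simp only
    have hd' : d ≤ M := le_trans (le_abs_self d) hMd
    have hdl : -M ≤ d := le_trans (neg_le_neg hMd) (neg_abs_le d)
    have h1 : A * (M + d) ≤ M * (M + M) := by
      apply mul_le_mul hMA (by linarith) (by linarith) (le_of_lt hMpos)
    have h2 : M * M * M ≤ (M + Dc * k ^ 2 + beta) * (M + D0 * k ^ 2) * (M + D0 * k ^ 2 + lam) := by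
      have hb : 0 < Dc * k ^ 2 + beta := by positivity
      have hc : 0 < D0 * k ^ 2 := by positivity
      nlinarith [mul_pos (mul_pos hMpos hMpos) hb, mul_pos (mul_pos hMpos hMpos) hc,
        mul_pos (mul_pos hMpos hMpos) hlam, mul_pos (mul_pos hMpos hb) hc,
        mul_pos (mul_pos hMpos hb) hlam, mul_pos (mul_pos hb hc) hlam,
        mul_pos (mul_pos hMpos hc) hlam, mul_pos (mul_pos hb hc) hc]
    have h3 : M * (M + M) ≤ M * M * M := by nlinarith [mul_pos hMpos hMpos]
    linarith [h1, h2, h3]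
  -- IVT
  have hcont : ContinuousOn P (Set.Icc 0 M) := by
    rw [hP]; fun_prop
  have hIVT := intermediate_value_Icc (le_of_lt hMpos) hcont
  have h0mem : (0:ℝ) ∈ Set.Icc (P 0) (P M) := ⟨le_of_lt hP0, hPM⟩
  obtain ⟨σ, hσmem, hσ⟩ := hIVT h0mem
  refine ⟨σ, ?_, hσ⟩
  rcases lt_or_eq_of_le hσmem.1 with h | h
  · exact h
  · exfalso; rw [← h] at hσ; linarith
end

section
/- Let ε, λ, α₀, g'_* > 0, u* ∈ ℝ, k ∈ ℝ, and 𝒟₀ : (0, ∞) → ℝ continuous. Let n*(u) = ρ*·√(λ/(2πε))·exp(−λ(u−u*)²/(2ε)), and let η, W : (0, ∞) → ℝ be twice continuously differentiable functions satisfying, for all u > 0: ε·η″ + d/du[λ(u−u*)η] − 𝒟₀(u)k²·η = g'_*·(n*)′ and ε·W″ − λ(u−u*)·W′ − 𝒟₀(u)k²·W = −α₀·u. Assume the functions u·η(u) and (n*)′(u)·W(u) are (Lebesgue) integrable on (0, ∞), and that the bilinear concomitant B(u) = ε(η′(u)W(u) − η(u)W′(u)) + λ(u−u*)·η(u)·W(u)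 tends to 0 as u → 0⁺ and as u → ∞. Then α₀·∫₀^∞ u·η(u) du = −g'_*·∫₀^∞ (n*)′(u)·W(u) du. Consequently the solvability condition D_ck² + β = α₀∫₀^∞ uη du of the linear problem is equivalent to the adjoint condition D_ck² + β + g'_*∫₀^∞ (n*)′W du = 0. -/
open Real Set Filter MeasureTheory

/-- Lagrange-identity equivalence of the direct and adjoint solvability
conditions: if `η` solves the linearised equation with source `g'_*(n*)′`, `W` solves
the adjoint equation with source `−α₀u`, the relevant integrands are integrable and
the bilinear concomitant vanishes at both ends of `(0,∞)`, then
`α₀∫₀^∞ uη = −g'_*∫₀^∞ (n*)′W`, so `D_ck² + β = α₀∫₀^∞ uη` iff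
`D_ck² + β + g'_*∫₀^∞ (n*)′W = 0`. -/
theorem direct_adjoint_solvability_equivalence
    (eps lam alpha0 gstar rhostar Dc beta : ℝ)
    (heps : 0 < eps) (hlam : 0 < lam) (halpha : 0 < alpha0) (hg : 0 < gstar)
    (hrho : 0 < rhostar)
    (ustar k : ℝ)
    (D0 : ℝ → ℝ) (hD0 : ContinuousOn D0 (Ioi 0))
    (nstar η W : ℝ → ℝ)
    (hnstar : nstar = fun u =>
      rhostar * Real.sqrt (lam / (2 * π * eps)) *
        Real.exp (-lam * (u - ustar) ^ 2 / (2 * eps)))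
    -- η, W twice continuously differentiable on (0,∞)
    (hηd : ∀ u ∈ Ioi (0 : ℝ), DifferentiableAt ℝ η u)
    (hηd' : ∀ u ∈ Ioi (0 : ℝ), DifferentiableAt ℝ (deriv η) u)
    (hηc : ContinuousOn (deriv (deriv η)) (Ioi 0))
    (hWd : ∀ u ∈ Ioi (0 : ℝ), DifferentiableAt ℝ W u)
    (hWd' : ∀ u ∈ Ioi (0 : ℝ), DifferentiableAt ℝ (deriv W) u)
    (hWc : ContinuousOn (deriv (deriv W)) (Ioi 0))
    -- the two differential equations
    (hηeq : ∀ u ∈ Ioi (0 : ℝ),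
      eps * deriv (deriv η) u + deriv (fun v => lam * (v - ustar) * η v) u
          - D0 u * k ^ 2 * η u = gstar * deriv nstar u)
    (hWeq : ∀ u ∈ Ioi (0 : ℝ),
      eps * deriv (deriv W) u - lam * (u - ustar) * deriv W u
          - D0 u * k ^ 2 * W u = -alpha0 * u)
    -- integrability
    (hint1 : IntegrableOn (fun u => u * η u) (Ioi 0))
    (hint2 : IntegrableOn (fun u => deriv nstar u * W u) (Ioi 0))
    -- bilinear concomitant vanishes at both ends
    (B : ℝ → ℝ)
    (hB : B = fun u =>
      eps * (deriv η u * W u - η u * deriv W u) + lam * (u - ustar) * η u * W u)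
    (hB0 : Tendsto B (nhdsWithin 0 (Ioi 0)) (nhds 0))
    (hBtop : Tendsto B atTop (nhds 0)) :
    alpha0 * (∫ u in Ioi (0 : ℝ), u * η u)
        = -gstar * ∫ u in Ioi (0 : ℝ), deriv nstar u * W u ∧
    ((Dc * k ^ 2 + beta = alpha0 * ∫ u in Ioi (0 : ℝ), u * η u) ↔
      (Dc * k ^ 2 + beta + gstar * (∫ u in Ioi (0 : ℝ), deriv nstar u * W u) = 0)) := by
  classical
  set F : ℝ → ℝ := fun u => gstar * (deriv nstar u * W u) + alpha0 * (u * η u) with hF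
  set Bt : ℝ → ℝ := fun u => if 0 < u then B u else 0 with hBt
  -- B has derivative F on (0,∞)  (Lagrange identity)
  have hderivB : ∀ u ∈ Ioi (0 : ℝ), HasDerivAt B (F u) u := by
    intro u hu
    have hη : HasDerivAt η (deriv η u) u := (hηd u hu).hasDerivAt
    have hη' : HasDerivAt (deriv η) (deriv (deriv η) u) u := (hηd' u hu).hasDerivAt
    have hW : HasDerivAt W (deriv W u) u := (hWd u hu).hasDerivAt
    have hW' : HasDerivAt (deriv W) (deriv (deriv W) u) u := (hWd' u hu).hasDerivAt
    have hlin : HasDerivAt (fun v => lam * (v - ustar)) lam u := by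
      simpa using ((hasDerivAt_id u).sub_const ustar).const_mul lam
    have htrans : HasDerivAt (fun v => lam * (v - ustar) * η v)
        (lam * η u + lam * (u - ustar) * deriv η u) u := hlin.mul hη
    have heq1 := hηeq u hu
    rw [htrans.deriv] at heq1
    have heq2 := hWeq u hu
    have h1 : HasDerivAt (fun v => eps * (deriv η v * W v - η v * deriv W v))
        (eps * ((deriv (deriv η) u * W u + deriv η u * deriv W u)
          - (deriv η u * deriv W u + η u * deriv (deriv W) u))) u :=
      ((hη'.mul hW).sub (hη.mul hW')).const_mul eps
    have h2 : HasDerivAt (fun v => lam * (v - ustar) * η v * W v)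
        ((lam * η u + lam * (u - ustar) * deriv η u) * W u
          + lam * (u - ustar) * η u * deriv W u) u := htrans.mul hW
    rw [hB]
    have h := h1.add h2
    refine h.congr_deriv (Eq.symm ?_)
    simp only [hF]
    linear_combination η u * heq2 - W u * heq1
  -- transfer to the modified function Bt
  have hderivBt : ∀ u ∈ Ioi (0 : ℝ), HasDerivAt Bt (F u) u := by
    intro u hu
    refine (hderivB u hu).congr_of_eventuallyEq ?_
    filter_upwards [isOpen_Ioi.mem_nhds hu] with x hx
    simp only [hBt]
    exact if_pos hx
  have hBt0 : Bt 0 = 0 := by simp [hBt]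
  have hcont : ContinuousWithinAt Bt (Ici (0 : ℝ)) 0 := by
    rw [← Set.Ioi_insert, continuousWithinAt_insert_self]
    unfold ContinuousWithinAt
    rw [hBt0]
    refine hB0.congr' ?_
    filter_upwards [self_mem_nhdsWithin] with x hx
    simp only [hBt]
    exact (if_pos hx).symm
  have htop : Tendsto Bt atTop (nhds 0) := by
    refine hBtop.congr' ?_
    filter_upwards [eventually_gt_atTop 0] with x hx
    simp only [hBt]
    exact (if_pos hx).symm
  have hFint : IntegrableOn F (Ioi (0 : ℝ)) :=
    (hint2.const_mul gstar).add (hint1.const_mul alpha0)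
  have key := integral_Ioi_of_hasDerivAt_of_tendsto hcont hderivBt hFint htop
  rw [hBt0, zero_sub, neg_zero] at key
  have hsplit : ∫ u in Ioi (0 : ℝ), F u
      = gstar * (∫ u in Ioi (0 : ℝ), deriv nstar u * W u)
        + alpha0 * (∫ u in Ioi (0 : ℝ), u * η u) := by
    simp only [hF]
    rw [integral_add (hint2.const_mul gstar) (hint1.const_mul alpha0),
      integral_const_mul, integral_const_mul]
  rw [hsplit] at key
  constructor
  · linarith
  · constructor <;> intro h <;> linarith
end
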